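/- Let G = (V, E) be a finite graph with Laplacian 𝓛, let E₁ ⊆ E with E₁ nonempty, let G₁ = (V, E₁) have Laplacian 𝓛₁, and let δ ≥ 0. Suppose that (1/(1+δ))·𝓛₁ ⪯ (1/2)·𝓛 ⪯ (1+δ)·𝓛₁. Then for every map f from V to a Hilbert space, (1/(1+δ)²) · Avg_{(u,v)∈E} ‖f(u) − f(v)‖² ≤ Avg_{(u,v)∈E₁} ‖f(u) − f(v)‖² ≤ (1+δ)² · Avg_{(u,v)∈E} ‖f(u) − f(v)‖², where Avg_{(u,v)∈F} denotes the average over the edges of F, i.e., (1/|F|)·Σ_{(u,v)∈F}. -/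

import Mathlib

open Finset in
/-- The average squared distance of the endpoints of an edge, over all
(ordered) edges of a finite graph, for a map `f` of the vertices into a
Hilbert space. -/
noncomputable def edgeAvgSq {V : Type*} [Fintype V] {H : Type*}
    [NormedAddCommGroup H] (G : SimpleGraph V) [DecidableRel G.Adj]
    (f : V → H) : ℝ :=
  (∑ p ∈ univ.filter (fun p : V × V => G.Adj p.1 p.2), ‖f p.1 - f p.2‖ ^ 2) /
    (univ.filter (fun p : V × V => G.Adj p.1 p.2)).card


section LapAux

open Finset Matrix SimpleGraph

variable {V : Type*} [Fintype V] [DecidableEq V]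

lemma lap_quad (G : SimpleGraph V) [DecidableRel G.Adj] (x : V → ℝ) :
    x ⬝ᵥ (G.lapMatrix ℝ *ᵥ x) =
      (∑ i : V, ∑ j : V, if G.Adj i j then (x i - x j) ^ 2 else 0) / 2 := by
  rw [show x ⬝ᵥ (G.lapMatrix ℝ *ᵥ x) = Matrix.toLinearMap₂' ℝ (G.lapMatrix ℝ) x x from
    (Matrix.toLinearMap₂'_apply' _ _ _).symm, SimpleGraph.lapMatrix_toLinearMap₂']

lemma key_scalar (G G₁ : SimpleGraph V) [DecidableRel G.Adj] [DecidableRel G₁.Adj]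
    (a b : ℝ) (h : (a • G.lapMatrix ℝ - b • G₁.lapMatrix ℝ).PosSemidef) (x : V → ℝ) :
    b * (∑ i : V, ∑ j : V, if G₁.Adj i j then (x i - x j) ^ 2 else 0) ≤
      a * (∑ i : V, ∑ j : V, if G.Adj i j then (x i - x j) ^ 2 else 0) := by
  have h0 := h.dotProduct_mulVec_nonneg x
  simp only [star_trivial, sub_mulVec, dotProduct_sub, smul_mulVec,
    dotProduct_smul, smul_eq_mul, lap_quad] at h0
  linarith

lemma key_vector (G G₁ : SimpleGraph V) [DecidableRel G.Adj] [DecidableRel G₁.Adj]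
    (a b : ℝ) (h : (a • G.lapMatrix ℝ - b • G₁.lapMatrix ℝ).PosSemidef)
    {H : Type*} [NormedAddCommGroup H] [InnerProductSpace ℝ H] (f : V → H) :
    b * (∑ i : V, ∑ j : V, if G₁.Adj i j then ‖f i - f j‖ ^ 2 else 0) ≤
      a * (∑ i : V, ∑ j : V, if G.Adj i j then ‖f i - f j‖ ^ 2 else 0) := by
  set W := Submodule.span ℝ (Set.range f)
  haveI : FiniteDimensional ℝ W := FiniteDimensional.span_of_finite ℝ (Set.finite_range f)
  set n := Module.finrank ℝ W with hn
  let bb : OrthonormalBasis (Fin n) ℝ W := stdOrthonormalBasis ℝ W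
  let g : V → W := fun v => ⟨f v, Submodule.subset_span ⟨v, rfl⟩⟩
  have hnorm : ∀ i j : V, ‖f i - f j‖ ^ 2 =
      ∑ k, ((inner ℝ (bb k) (g i) : ℝ) - (inner ℝ (bb k) (g j) : ℝ)) ^ 2 := by
    intro i j
    have hco : ‖f i - f j‖ = ‖g i - g j‖ := by
      have hc : ((g i - g j : W) : H) = f i - f j := by simp [g]
      rw [← hc, Submodule.norm_coe]
    rw [hco]
    have hpar := bb.sum_inner_mul_inner (g i - g j) (g i - g j)
    rw [real_inner_self_eq_norm_sq] at hpar
    rw [← hpar]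
    refine Finset.sum_congr rfl fun k _ => ?_
    simp only [inner_sub_left, inner_sub_right]
    rw [real_inner_comm (g i) (bb k), real_inner_comm (g j) (bb k)]
    ring
  have expand : ∀ (G' : SimpleGraph V) (inst : DecidableRel G'.Adj),
      (∑ i : V, ∑ j : V, if G'.Adj i j then ‖f i - f j‖ ^ 2 else 0) =
      ∑ k, ∑ i : V, ∑ j : V,
        if G'.Adj i j then
          ((fun v => (inner ℝ (bb k) (g v) : ℝ)) i - (fun v => (inner ℝ (bb k) (g v) : ℝ)) j) ^ 2
        else 0 := by
    intro G' inst
    calc (∑ i : V, ∑ j : V, if G'.Adj i j then ‖f i - f j‖ ^ 2 else 0)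
        = ∑ i : V, ∑ j : V, ∑ k,
            (if G'.Adj i j then
              ((fun v => (inner ℝ (bb k) (g v) : ℝ)) i - (fun v => (inner ℝ (bb k) (g v) : ℝ)) j) ^ 2
            else 0) := by
          refine Finset.sum_congr rfl fun i _ => Finset.sum_congr rfl fun j _ => ?_
          rw [hnorm i j]
          split
          · rfl
          · simp
      _ = ∑ i : V, ∑ k, ∑ j : V, _ := Finset.sum_congr rfl fun i _ => Finset.sum_comm
      _ = ∑ k, ∑ i : V, ∑ j : V, _ := Finset.sum_comm
  have eG := expand G ‹_›
  have eG₁ := expand G₁ ‹_›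
  rw [eG, eG₁, Finset.mul_sum, Finset.mul_sum]
  exact Finset.sum_le_sum fun k _ => key_scalar G G₁ a b h _

lemma card_pairs (G : SimpleGraph V) [DecidableRel G.Adj] :
    (((univ.filter fun p : V × V => G.Adj p.1 p.2).card : ℝ)) =
      ∑ i : V, ∑ j : V, if G.Adj i j then (1 : ℝ) else 0 := by
  rw [Finset.card_filter]
  push_cast
  rw [Fintype.sum_prod_type]

lemma key_card (G G₁ : SimpleGraph V) [DecidableRel G.Adj] [DecidableRel G₁.Adj]
    (a b : ℝ) (h : (a • G.lapMatrix ℝ - b • G₁.lapMatrix ℝ).PosSemidef) :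
    b * ((univ.filter fun p : V × V => G₁.Adj p.1 p.2).card : ℝ) ≤
      a * ((univ.filter fun p : V × V => G.Adj p.1 p.2).card : ℝ) := by
  have hsingle : ∀ (G' : SimpleGraph V) (_ : DecidableRel G'.Adj),
      (∑ u : V, ∑ i : V, ∑ j : V,
        if G'.Adj i j then ((Pi.single u (1:ℝ) : V → ℝ) i - (Pi.single u (1:ℝ) : V → ℝ) j) ^ 2 else 0) =
      2 * ((univ.filter fun p : V × V => G'.Adj p.1 p.2).card : ℝ) := by
    intro G' _
    rw [Finset.sum_comm, card_pairs, Finset.mul_sum]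
    refine Finset.sum_congr rfl fun i _ => ?_
    rw [Finset.sum_comm, Finset.mul_sum]
    refine Finset.sum_congr rfl fun j _ => ?_
    rcases eq_or_ne i j with rfl | hij
    · simp
    · have hinner : ∑ u : V, ((Pi.single u (1:ℝ) : V → ℝ) i - (Pi.single u (1:ℝ) : V → ℝ) j) ^ 2 = 2 := by
        have : ∀ u : V, ((Pi.single u (1:ℝ) : V → ℝ) i - (Pi.single u (1:ℝ) : V → ℝ) j) ^ 2 =
            (if i = u then (1:ℝ) else 0) + (if j = u then (1:ℝ) else 0) := by
          intro u
          rcases eq_or_ne u i with rfl | hui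
          · simp [Pi.single_apply, hij.symm]
          · rcases eq_or_ne u j with rfl | huj
            · simp [Pi.single_apply, hij, Ne.symm hui]
            · simp [Pi.single_apply, Ne.symm hui, Ne.symm huj]
        simp_rw [this, Finset.sum_add_distrib, Finset.sum_ite_eq, Finset.mem_univ, if_true]
        norm_num
      rw [show (∑ u : V, if G'.Adj i j then ((Pi.single u (1:ℝ) : V → ℝ) i - (Pi.single u (1:ℝ) : V → ℝ) j) ^ 2 else 0)
          = if G'.Adj i j then ∑ u : V, ((Pi.single u (1:ℝ) : V → ℝ) i - (Pi.single u (1:ℝ) : V → ℝ) j) ^ 2 else 0 by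
          split <;> simp, hinner]
      split <;> ring
  have hsum := Finset.sum_le_sum (fun u (_ : u ∈ (univ : Finset V)) =>
    key_scalar G G₁ a b h (Pi.single u (1:ℝ) : V → ℝ))
  have e1 := hsingle G ‹_›
  have e2 := hsingle G₁ ‹_›
  rw [← Finset.mul_sum, ← Finset.mul_sum, e1, e2] at hsum
  linarith

end LapAux

open Finset in
/-- If the Laplacians of a finite graph `G = (V,E)` and a nonempty subgraph
`G₁ = (V,E₁)` (with `E₁ ⊆ E`) satisfy `(1/(1+δ))·𝓛₁ ⪯ (1/2)·𝓛 ⪯ (1+δ)·𝓛₁`,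
then for every map `f` of `V` into a Hilbert space the average of
`‖f(u) - f(v)‖²` over `E₁` is within a factor `(1+δ)²` of the average over
`E`. -/
theorem laplacian_comparison_average_bound
    {V : Type*} [Fintype V] [DecidableEq V]
    (G G₁ : SimpleGraph V) [DecidableRel G.Adj] [DecidableRel G₁.Adj]
    (hle : G₁ ≤ G) (hne : ∃ u v, G₁.Adj u v) (δ : ℝ) (hδ : 0 ≤ δ)
    (h1 : ((1 / 2 : ℝ) • G.lapMatrix ℝ - (1 / (1 + δ)) • G₁.lapMatrix ℝ).PosSemidef)
    (h2 : ((1 + δ) • G₁.lapMatrix ℝ - (1 / 2 : ℝ) • G.lapMatrix ℝ).PosSemidef)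
    {H : Type*} [NormedAddCommGroup H] [InnerProductSpace ℝ H] [CompleteSpace H]
    (f : V → H) :
    1 / (1 + δ) ^ 2 * edgeAvgSq G f ≤ edgeAvgSq G₁ f ∧
      edgeAvgSq G₁ f ≤ (1 + δ) ^ 2 * edgeAvgSq G f := by
  obtain ⟨u, v, huv⟩ := hne
  have h1δ : (0:ℝ) < 1 + δ := by linarith
  have hinv : (1 + δ) * (1 / (1 + δ)) = (1:ℝ) := mul_one_div_cancel h1δ.ne'
  have hfilter : ∀ (G' : SimpleGraph V) (inst : DecidableRel G'.Adj),
      (∑ p ∈ univ.filter (fun p : V × V => G'.Adj p.1 p.2), ‖f p.1 - f p.2‖ ^ 2)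
        = ∑ i : V, ∑ j : V, if G'.Adj i j then ‖f i - f j‖ ^ 2 else 0 := by
    intro G' inst
    rw [Finset.sum_filter, Fintype.sum_prod_type]
  set S := ∑ i : V, ∑ j : V, if G.Adj i j then ‖f i - f j‖ ^ 2 else 0 with hS
  set S₁ := ∑ i : V, ∑ j : V, if G₁.Adj i j then ‖f i - f j‖ ^ 2 else 0 with hS₁
  set m := ((univ.filter fun p : V × V => G.Adj p.1 p.2).card : ℝ) with hm
  set m₁ := ((univ.filter fun p : V × V => G₁.Adj p.1 p.2).card : ℝ) with hm₁
  have hm₁pos : 0 < m₁ := by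
    rw [hm₁]
    exact_mod_cast Finset.card_pos.mpr ⟨(u, v), by simp [huv]⟩
  have hmpos : 0 < m := by
    rw [hm]
    exact_mod_cast Finset.card_pos.mpr ⟨(u, v), by simp [hle huv]⟩
  have hS0 : 0 ≤ S := Finset.sum_nonneg fun i _ => Finset.sum_nonneg fun j _ => by positivity
  have hS₁0 : 0 ≤ S₁ := Finset.sum_nonneg fun i _ => Finset.sum_nonneg fun j _ => by positivity
  have hA := key_vector G G₁ (1/2) (1/(1+δ)) h1 f
  have hB := key_vector G₁ G (1+δ) (1/2) h2 f
  have hC := key_card G G₁ (1/2) (1/(1+δ)) h1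
  have hD := key_card G₁ G (1+δ) (1/2) h2
  rw [← hS, ← hS₁] at hA hB
  rw [← hm, ← hm₁] at hC hD
  have k1 : S ≤ 2 * (1+δ) * S₁ := by linarith
  have k2 : m₁ ≤ (1+δ)/2 * m := by
    nlinarith [mul_le_mul_of_nonneg_left hC h1δ.le]
  have k3 : S₁ ≤ (1+δ)/2 * S := by
    nlinarith [mul_le_mul_of_nonneg_left hA h1δ.le]
  have k4 : m ≤ 2 * (1+δ) * m₁ := by linarith
  have hEG : edgeAvgSq G f = S / m := by
    have e := hfilter G ‹_›
    rw [edgeAvgSq, e]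
  have hEG₁ : edgeAvgSq G₁ f = S₁ / m₁ := by
    have e := hfilter G₁ ‹_›
    rw [edgeAvgSq, e]
  rw [hEG, hEG₁]
  constructor
  · rw [show (1:ℝ) / (1+δ)^2 * (S / m) = S / ((1+δ)^2 * m) by
      rw [div_mul_div_comm, one_mul]]
    rw [div_le_div_iff₀ (by positivity) hm₁pos]
    have t1 := mul_le_mul_of_nonneg_left k2 hS0
    have t2 := mul_le_mul_of_nonneg_right k1
      (by positivity : (0:ℝ) ≤ (1+δ)/2 * m)
    exact le_trans t1 (le_trans t2 (le_of_eq (by ring)))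
  · rw [show (1+δ)^2 * (S / m) = ((1+δ)^2 * S) / m by ring]
    rw [div_le_div_iff₀ hm₁pos hmpos]
    have t3 := mul_le_mul_of_nonneg_right k3 hmpos.le
    have t4 := mul_le_mul_of_nonneg_left k4
      (by positivity : (0:ℝ) ≤ (1+δ)/2 * S)
    exact le_trans t3 (le_trans t4 (le_of_eq (by ring)))
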